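/- For every n and k, the set CPR_n(k) of real symmetric n×n matrices A such that A = BBᵀ for some entrywise nonnegative n×k matrix B is a closed cone: it is a closed subset of the space of real symmetric n×n matrices, and it is closed under multiplication by nonnegative real scalars. -/

import Mathlib

open Matrix

/-- `CPR n k`: the set of real `n×n` matrices admitting an entrywise nonnegative `n×k`
factorization `A = BBᵀ` (such matrices are automatically symmetric). -/
def CPR (n k : ℕ) : Set (Matrix (Fin n) (Fin n) ℝ) :=
  {A | ∃ B : Matrix (Fin n) (Fin k) ℝ, (∀ i j, 0 ≤ B i j) ∧ A = B * Bᵀ}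

/-- for every `n` and `k`, `CPR n k` is a closed cone: it is a closed subset
and is stable under multiplication by nonnegative scalars. -/
theorem CPR_isClosed_cone (n k : ℕ) :
    IsClosed (CPR n k) ∧ ∀ c : ℝ, 0 ≤ c → ∀ A ∈ CPR n k, c • A ∈ CPR n k := by
  haveI : SequentialSpace (Matrix (Fin n) (Fin n) ℝ) :=
    inferInstanceAs (SequentialSpace (Fin n → Fin n → ℝ))
  constructor
  · -- closedness via sequential closedness
    apply IsSeqClosed.isClosed
    intro u A hu hA
    choose B hBnn hBeq using hu
    -- the diagonal-sum is bounded
    have hdiag : ∀ m i, (u m) i i = ∑ j, (B m i j) ^ 2 := by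
      intro m i
      rw [hBeq m, Matrix.mul_apply]
      simp [sq]
    have hDten : Filter.Tendsto (fun m => ∑ i, (u m) i i) Filter.atTop
        (nhds (∑ i, A i i)) := by
      exact tendsto_finset_sum _ fun i _ =>
        ((continuous_id.matrix_elem i i).tendsto A).comp hA
    obtain ⟨C, hC⟩ := hDten.bddAbove_range
    have hC' : ∀ m, ∑ i, (u m) i i ≤ C := fun m => hC ⟨m, rfl⟩
    -- each entry of B m is in [0, √C]
    have hentry : ∀ m i j, B m i j ∈ Set.Icc (0 : ℝ) (Real.sqrt C) := by
      intro m i j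
      refine ⟨hBnn m i j, ?_⟩
      have h1 : (B m i j) ^ 2 ≤ (u m) i i := by
        rw [hdiag m i]
        exact Finset.single_le_sum (f := fun j' => B m i j' ^ 2)
          (fun j' _ => sq_nonneg _) (Finset.mem_univ j)
      have h2 : (u m) i i ≤ ∑ i', (u m) i' i' := by
        refine Finset.single_le_sum (f := fun i' => (u m) i' i')
          (fun i' _ => ?_) (Finset.mem_univ i)
        simp only [hdiag m i']
        exact Finset.sum_nonneg fun j' _ => sq_nonneg _
      calc B m i j ≤ Real.sqrt ((B m i j) ^ 2) := by
            rw [Real.sqrt_sq_eq_abs]; exact le_abs_self _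
        _ ≤ Real.sqrt C := Real.sqrt_le_sqrt (h1.trans (h2.trans (hC' m)))
    -- B takes values in a compact set
    haveI : FirstCountableTopology (Matrix (Fin n) (Fin k) ℝ) :=
      inferInstanceAs (FirstCountableTopology (Fin n → Fin k → ℝ))
    have hcompact : IsCompact (X := Matrix (Fin n) (Fin k) ℝ) ((Set.univ.pi (fun _ : Fin n => Set.univ.pi
        fun _ : Fin k => Set.Icc (0 : ℝ) (Real.sqrt C))) :
          Set (Matrix (Fin n) (Fin k) ℝ)) :=
      isCompact_univ_pi fun _ => isCompact_univ_pi fun _ => isCompact_Icc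
    obtain ⟨L, hLmem, φ, hφ, hLtend⟩ :=
      hcompact.tendsto_subseq (x := B) fun m =>
        Set.mem_univ_pi.2 fun i => Set.mem_univ_pi.2 fun j => hentry m i j
    replace hLmem := Set.mem_univ_pi.1 hLmem
    refine ⟨L, fun i j => ((Set.mem_univ_pi.1 (hLmem i)) j).1, ?_⟩
    -- limits
    have h1 : Filter.Tendsto (fun m => u (φ m)) Filter.atTop (nhds A) :=
      hA.comp hφ.tendsto_atTop
    have h2 : Filter.Tendsto (fun m => u (φ m)) Filter.atTop (nhds (L * Lᵀ)) := by
      have hcont : Continuous fun M : Matrix (Fin n) (Fin k) ℝ => M * Mᵀ :=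
        continuous_id.matrix_mul continuous_id.matrix_transpose
      have := (hcont.tendsto L).comp hLtend
      refine this.congr fun m => ?_
      exact (hBeq (φ m)).symm
    exact tendsto_nhds_unique h1 h2
  · rintro c hc A ⟨B, hBnn, rfl⟩
    refine ⟨Real.sqrt c • B, fun i j => ?_, ?_⟩
    · exact mul_nonneg (Real.sqrt_nonneg c) (hBnn i j)
    · rw [Matrix.transpose_smul, Matrix.smul_mul, Matrix.mul_smul, smul_smul,
        Real.mul_self_sqrt hc]
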